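/- arXiv:2605.05284 — 2 statements merged into one kernel-verified Lean document; each statement's English description precedes it below -/
import Mathlib

section
/- If P_g is Gaussian with mean m (as a function of m) and F is a fixed positive integrable fitness function, then the selection gradient f_g defined as the regression coefficient V_g^{-1}cov_g(φ, F/⟨F⟩_g) equals the gradient with respect to the mean of the log of the mean fitness: f_g = ∇_m log⟨F⟩_g where ⟨F⟩_g(m) = ∫F(φ)N(φ; m, V_g)dφ. -/
open MeasureTheory Matrix Real

/-- The multivariate Gaussian density on `ℝ^N` with mean `m` and covariance `S`. -/
noncomputable def gaussPDF {n : ℕ} (m : Fin n → ℝ) (S : Matrix (Fin n) (Fin n) ℝ)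
    (x : Fin n → ℝ) : ℝ :=
  (Real.sqrt ((2 * Real.pi) ^ n * S.det))⁻¹ *
    Real.exp (-(1 / 2) * ((x - m) ⬝ᵥ (S⁻¹ *ᵥ (x - m))))

lemma lande_dot_symm {n : ℕ} (A : Matrix (Fin n) (Fin n) ℝ) (hA : Aᵀ = A) (u v : Fin n → ℝ) :
    u ⬝ᵥ (A *ᵥ v) = v ⬝ᵥ (A *ᵥ u) := by
  rw [dotProduct_mulVec, ← hA, vecMul_transpose, dotProduct_comm, hA]

lemma lande_gauss_shift {n : ℕ} (m v : Fin n → ℝ) (V : Matrix (Fin n) (Fin n) ℝ)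
    (hsymm : (V⁻¹)ᵀ = V⁻¹) (x : Fin n → ℝ) :
    gaussPDF (m + v) V x
      = gaussPDF m V x *
        Real.exp ((x - m) ⬝ᵥ (V⁻¹ *ᵥ v) - (v ⬝ᵥ (V⁻¹ *ᵥ v)) / 2) := by
  unfold gaussPDF
  rw [mul_assoc, ← Real.exp_add]
  congr 2
  have h1 : x - (m + v) = (x - m) - v := by abel
  rw [h1]
  simp only [sub_dotProduct, dotProduct_sub, mulVec_sub]
  rw [lande_dot_symm V⁻¹ hsymm v x, lande_dot_symm V⁻¹ hsymm v m]
  ring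

lemma lande_gauss_pos {n : ℕ} (m : Fin n → ℝ) (V : Matrix (Fin n) (Fin n) ℝ)
    (hV : V.PosDef) (x : Fin n → ℝ) : 0 < gaussPDF m V x := by
  unfold gaussPDF
  have hdet : 0 < V.det := hV.det_pos
  have h1 : 0 < (2 * Real.pi) ^ n * V.det := by positivity
  exact mul_pos (inv_pos.2 (Real.sqrt_pos.2 h1)) (Real.exp_pos _)

/-- Lande's gradient form of the Price equation: For a Gaussian
population `N(m, V)` and a fixed positive fitness `F`, the selection gradient
`f_g = V⁻¹ cov(φ, F/⟨F⟩)` equals the gradient with respect to the mean of the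
log mean fitness `log⟨F⟩(m)`, where `⟨F⟩(m) = ∫ F(φ) N(φ; m, V) dφ`.
Differentiability under the integral sign (in every direction `v`) is taken as
a hypothesis. -/
theorem lande_gradient
    {n : ℕ} (m : Fin n → ℝ) (V : Matrix (Fin n) (Fin n) ℝ) (hV : V.PosDef)
    (F : (Fin n → ℝ) → ℝ) (hFpos : ∀ x, 0 < F x)
    (meanFit : (Fin n → ℝ) → ℝ)
    (hmeanFit : ∀ m', meanFit m' = ∫ x, F x * gaussPDF m' V x)
    (hfin : ∀ m', Integrable fun x => F x * gaussPDF m' V x)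
    (hpos : 0 < meanFit m)
    (cov : Fin n → ℝ)
    (hcov : ∀ i, cov i = ∫ x, (x i - m i) * (F x / meanFit m) * gaussPDF m V x)
    (hderiv : ∀ v : Fin n → ℝ,
      HasDerivAt (fun t : ℝ => meanFit (m + t • v))
        (∫ x, F x * gaussPDF m V x * ((V⁻¹ *ᵥ (x - m)) ⬝ᵥ v)) 0) :
    ∀ v : Fin n → ℝ,
      HasDerivAt (fun t : ℝ => Real.log (meanFit (m + t • v)))
        ((V⁻¹ *ᵥ cov) ⬝ᵥ v) 0 := by
  have hdet : V.det ≠ 0 := hV.det_pos.ne'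
  have hsymm : (V⁻¹)ᵀ = V⁻¹ := by
    rw [Matrix.transpose_nonsing_inv]
    congr 1
    simpa using hV.isHermitian.eq
  set c : ℝ := meanFit m with hc
  -- integrability of `F · g · ((x-m) ⬝ᵥ w)` for any fixed `w`
  have hInt : ∀ w : Fin n → ℝ,
      Integrable fun x => F x * gaussPDF m V x * ((x - m) ⬝ᵥ w) := by
    intro w
    set v : Fin n → ℝ := V *ᵥ w with hvdef
    have hVinv : V⁻¹ *ᵥ v = w := by
      rw [hvdef, Matrix.mulVec_mulVec, Matrix.nonsing_inv_mul _ (by simpa using hdet),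
        Matrix.one_mulVec]
    set k : ℝ := v ⬝ᵥ w with hk
    have hplus : ∀ x, gaussPDF (m + v) V x
        = gaussPDF m V x * Real.exp ((x - m) ⬝ᵥ w - k / 2) := by
      intro x; rw [lande_gauss_shift m v V hsymm x, hVinv]
    have hminus : ∀ x, gaussPDF (m + (-v)) V x
        = gaussPDF m V x * Real.exp (-((x - m) ⬝ᵥ w) - k / 2) := by
      intro x
      rw [lande_gauss_shift m (-v) V hsymm x]
      congr 2
      simp only [Matrix.mulVec_neg, dotProduct_neg, neg_dotProduct, neg_neg, hVinv]
      rw [hk]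
    have hLc : Continuous fun x : Fin n → ℝ => (x - m) ⬝ᵥ w := by
      simp only [dotProduct, Pi.sub_apply]
      exact continuous_finset_sum _ fun i _ =>
        ((continuous_apply i).sub continuous_const).mul continuous_const
    have hbound : Integrable fun x =>
        Real.exp (k / 2) * (F x * gaussPDF (m + v) V x + F x * gaussPDF (m + (-v)) V x) :=
      (((hfin (m + v)).add (hfin (m + (-v)))).const_mul _)
    refine hbound.mono' ((hfin m).aestronglyMeasurable.mul hLc.aestronglyMeasurable)
      (Filter.Eventually.of_forall fun x => ?_)
    have hFg : 0 < F x * gaussPDF m V x :=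
      mul_pos (hFpos x) (lande_gauss_pos m V hV x)
    set L : ℝ := (x - m) ⬝ᵥ w
    have habs : |L| ≤ Real.exp L + Real.exp (-L) := by
      rcases abs_cases L with ⟨h1, _⟩ | ⟨h1, _⟩
      · rw [h1]
        calc L ≤ Real.exp L := (Real.add_one_le_exp L).trans' (by linarith)
        _ ≤ Real.exp L + Real.exp (-L) := le_add_of_nonneg_right (Real.exp_pos _).le
      · rw [h1]
        calc -L ≤ Real.exp (-L) := (Real.add_one_le_exp (-L)).trans' (by linarith)
        _ ≤ Real.exp L + Real.exp (-L) := le_add_of_nonneg_left (Real.exp_pos _).le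
    rw [Real.norm_eq_abs, abs_mul, abs_of_pos hFg]
    calc F x * gaussPDF m V x * |L|
        ≤ F x * gaussPDF m V x * (Real.exp L + Real.exp (-L)) := by
          exact mul_le_mul_of_nonneg_left habs hFg.le
      _ = Real.exp (k / 2) *
          (F x * gaussPDF (m + v) V x + F x * gaussPDF (m + (-v)) V x) := by
          rw [hplus x, hminus x,
            show Real.exp L = Real.exp (k / 2) * Real.exp (L - k / 2) by
              rw [← Real.exp_add]; congr 1; ring,
            show Real.exp (-L) = Real.exp (k / 2) * Real.exp (-L - k / 2) by
              rw [← Real.exp_add]; congr 1; ring]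
          ring
  -- integral of the coordinate moments
  have hMom : ∀ i : Fin n,
      (∫ x, F x * gaussPDF m V x * (x i - m i)) = c * cov i := by
    intro i
    have h1 : (fun x : Fin n → ℝ => (x i - m i) * (F x / c) * gaussPDF m V x)
        = fun x => c⁻¹ * (F x * gaussPDF m V x * (x i - m i)) := by
      funext x; field_simp
    rw [hcov i, h1, integral_const_mul]
    field_simp
  -- main identity
  intro v
  set w : Fin n → ℝ := V⁻¹ *ᵥ v with hw
  have hrw : ∀ x : Fin n → ℝ, (V⁻¹ *ᵥ (x - m)) ⬝ᵥ v = (x - m) ⬝ᵥ w := by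
    intro x
    rw [dotProduct_comm, lande_dot_symm V⁻¹ hsymm v (x - m)]
  have hIntCoord : ∀ i : Fin n,
      Integrable fun x => F x * gaussPDF m V x * (x i - m i) := by
    intro i
    have := hInt (Pi.single i 1)
    simpa [dotProduct_single, Pi.sub_apply] using this
  have hkey : (∫ x, F x * gaussPDF m V x * ((V⁻¹ *ᵥ (x - m)) ⬝ᵥ v))
      = c * ((V⁻¹ *ᵥ cov) ⬝ᵥ v) := by
    have h2 : (fun x : Fin n → ℝ => F x * gaussPDF m V x * ((V⁻¹ *ᵥ (x - m)) ⬝ᵥ v))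
        = fun x => ∑ i : Fin n, (F x * gaussPDF m V x * (x i - m i)) * w i := by
      funext x
      rw [hrw x]
      simp only [dotProduct, Pi.sub_apply]
      rw [Finset.mul_sum]
      exact Finset.sum_congr rfl fun i _ => by ring
    rw [h2, integral_finset_sum _ fun i _ => (hIntCoord i).mul_const (w i)]
    have h3 : (V⁻¹ *ᵥ cov) ⬝ᵥ v = cov ⬝ᵥ w := by
      rw [dotProduct_comm, lande_dot_symm V⁻¹ hsymm v cov]
    rw [h3]
    simp only [integral_mul_const, hMom]
    simp only [dotProduct]
    rw [Finset.mul_sum]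
    exact Finset.sum_congr rfl fun i _ => by ring
  have hne : (fun t : ℝ => meanFit (m + t • v)) 0 ≠ 0 := by
    simpa using hpos.ne'
  have hlog := (hderiv v).log hne
  have h0 : meanFit (m + (0 : ℝ) • v) = c := by simp [hc]
  rw [hkey] at hlog
  convert hlog using 1
  simp only [h0]
  field_simp
end

section
/- For vectors p, q ∈ ℝ^N, the symmetric matrix ppᵀ − qqᵀ can be written as ½(uvᵀ + vuᵀ) with u = p + q and v = p − q, and its nonzero eigenvalues are exactly ½(uᵀv ± ‖u‖‖v‖); in particular its minimum eigenvalue is min(0, ½(‖p‖² − ‖q‖² − ‖p+q‖‖p−q‖)). -/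
open Matrix

set_option maxHeartbeats 1000000

private lemma rk2_dot_self_nonneg {n : ℕ} (w : Fin n → ℝ) : 0 ≤ w ⬝ᵥ w :=
  Finset.sum_nonneg fun i _ => mul_self_nonneg (w i)

private lemma rk2_vmv {n : ℕ} (w v x : Fin n → ℝ) :
    (Matrix.vecMulVec w v).mulVec x = (v ⬝ᵥ x) • w := by
  funext i
  simp only [Matrix.mulVec, dotProduct, Matrix.vecMulVec_apply, Pi.smul_apply,
    smul_eq_mul, Finset.sum_mul]
  exact Finset.sum_congr rfl fun j _ => by ring

private lemma rk2_mulVec {n : ℕ} (p q x : Fin n → ℝ) :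
    (Matrix.vecMulVec p p - Matrix.vecMulVec q q).mulVec x
      = (p ⬝ᵥ x) • p - (q ⬝ᵥ x) • q := by
  rw [Matrix.sub_mulVec, rk2_vmv, rk2_vmv]

-- Cauchy-Schwarz for dotProduct
private lemma rk2_cs {n : ℕ} (x y : Fin n → ℝ) :
    x ⬝ᵥ y ≤ Real.sqrt (x ⬝ᵥ x) * Real.sqrt (y ⬝ᵥ y) := by
  let X : EuclideanSpace ℝ (Fin n) := WithLp.toLp 2 x
  let Y : EuclideanSpace ℝ (Fin n) := WithLp.toLp 2 y
  have h1 : x ⬝ᵥ y = (inner ℝ X Y : ℝ) := by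
    simp [PiLp.inner_apply, X, Y, dotProduct, RCLike.inner_apply, mul_comm]
  have hXX : x ⬝ᵥ x = (inner ℝ X X : ℝ) := by
    simp [PiLp.inner_apply, X, dotProduct, RCLike.inner_apply, mul_comm, -inner_self_eq_norm_sq_to_K]
  have hYY : y ⬝ᵥ y = (inner ℝ Y Y : ℝ) := by
    simp [PiLp.inner_apply, Y, dotProduct, RCLike.inner_apply, mul_comm, -inner_self_eq_norm_sq_to_K]
  have h2 : Real.sqrt (x ⬝ᵥ x) = ‖X‖ := by
    rw [norm_eq_sqrt_real_inner, hXX]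
  have h3 : Real.sqrt (y ⬝ᵥ y) = ‖Y‖ := by
    rw [norm_eq_sqrt_real_inner, hYY]
  rw [h1, h2, h3]
  exact real_inner_le_norm X Y

private lemma rk2_ortho {n : ℕ} (hn : 2 ≤ n) (w : Fin n → ℝ) :
    ∃ x : Fin n → ℝ, x ≠ 0 ∧ w ⬝ᵥ x = 0 := by
  have h0 : 0 < n := by omega
  have h1 : 1 < n := by omega
  set i0 : Fin n := ⟨0, h0⟩ with hi0
  set i1 : Fin n := ⟨1, h1⟩ with hi1
  have hne : i0 ≠ i1 := by simp [hi0, hi1, Fin.ext_iff]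
  by_cases hw : w i0 = 0
  · refine ⟨Pi.single i0 1, ?_, ?_⟩
    · intro h
      have := congrFun h i0
      simp at this
    · rw [dotProduct_single, hw, zero_mul]
  · refine ⟨Pi.single i0 (w i1) - Pi.single i1 (w i0), ?_, ?_⟩
    · intro h
      have := congrFun h i1
      simp [Pi.single_apply, hne.symm, hne] at this
      exact hw this
    · rw [dotProduct_sub, dotProduct_single, dotProduct_single]
      ring

/-- For `p, q ∈ ℝ^N`, the symmetric matrix `p pᵀ − q qᵀ` equals
`½(u vᵀ + v uᵀ)` with `u = p + q`, `v = p − q`; its nonzero eigenvalues are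
exactly `½(uᵀv ± ‖u‖‖v‖)`; and (for `N ≥ 2`) its minimum eigenvalue is
`min(0, ½(‖p‖² − ‖q‖² − ‖p+q‖‖p−q‖))`. -/
theorem rank_two_eigenvalues
    {n : ℕ} (p q u v : Fin n → ℝ)
    (hu : u = p + q) (hv : v = p - q)
    (M : Matrix (Fin n) (Fin n) ℝ)
    (hM : M = Matrix.vecMulVec p p - Matrix.vecMulVec q q)
    (lamP lamM : ℝ)
    (hlamP : lamP = (u ⬝ᵥ v + Real.sqrt (u ⬝ᵥ u) * Real.sqrt (v ⬝ᵥ v)) / 2)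
    (hlamM : lamM = (u ⬝ᵥ v - Real.sqrt (u ⬝ᵥ u) * Real.sqrt (v ⬝ᵥ v)) / 2) :
    (M = (1 / 2 : ℝ) • (Matrix.vecMulVec u v + Matrix.vecMulVec v u)) ∧
      (∀ lam : ℝ, lam ≠ 0 →
        (Module.End.HasEigenvalue (Matrix.toLin' M) lam ↔ lam = lamP ∨ lam = lamM)) ∧
      (2 ≤ n →
        IsLeast {lam : ℝ | Module.End.HasEigenvalue (Matrix.toLin' M) lam}
          (min 0 lamM)) := by
  classical
  set a := p ⬝ᵥ p with ha
  set b := p ⬝ᵥ q with hb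
  set c := q ⬝ᵥ q with hc
  have ha0 : 0 ≤ a := rk2_dot_self_nonneg p
  have hc0 : 0 ≤ c := rk2_dot_self_nonneg q
  have hqp : q ⬝ᵥ p = b := by rw [dotProduct_comm]
  -- dot product expansions
  have huv : u ⬝ᵥ v = a - c := by
    rw [hu, hv]
    simp only [add_dotProduct, dotProduct_sub, ← ha, ← hc, hb, hqp]
    ring
  have huu : u ⬝ᵥ u = a + 2 * b + c := by
    rw [hu]
    simp only [add_dotProduct, dotProduct_add, ← ha, ← hc, hb, hqp]
    ring
  have hvv : v ⬝ᵥ v = a - 2 * b + c := by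
    rw [hv]
    simp only [sub_dotProduct, dotProduct_sub, ← ha, ← hc, hb, hqp]
    ring
  set s := Real.sqrt (u ⬝ᵥ u) * Real.sqrt (v ⬝ᵥ v) with hs
  have hs0 : 0 ≤ s := mul_nonneg (Real.sqrt_nonneg _) (Real.sqrt_nonneg _)
  have hs2 : s * s = (a + c) ^ 2 - 4 * b ^ 2 := by
    have : s * s = (u ⬝ᵥ u) * (v ⬝ᵥ v) := by
      rw [hs, mul_mul_mul_comm, Real.mul_self_sqrt (rk2_dot_self_nonneg u),
        Real.mul_self_sqrt (rk2_dot_self_nonneg v)]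
    rw [this, huu, hvv]; ring
  -- Vieta
  have hsum : lamP + lamM = a - c := by rw [hlamP, hlamM, huv]; ring
  have hprod : lamP * lamM = b ^ 2 - a * c := by
    rw [hlamP, hlamM, huv]
    have : (u ⬝ᵥ v - s) = (a - c) - s := by rw [huv]
    field_simp
    nlinarith [hs2]
  have hMle : lamM ≤ lamP := by rw [hlamP, hlamM]; nlinarith [hs0]
  -- Cauchy-Schwarz gives lamM ≤ 0
  have hlamM0 : lamM ≤ 0 := by
    have := rk2_cs u v
    rw [hlamM]
    rw [← hs] at this
    linarith
  -- mulVec formula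
  have hmv : ∀ x : Fin n → ℝ, M.mulVec x = (p ⬝ᵥ x) • p - (q ⬝ᵥ x) • q := by
    intro x; rw [hM]; exact rk2_mulVec p q x
  have htl : ∀ x : Fin n → ℝ, Matrix.toLin' M x = (p ⬝ᵥ x) • p - (q ⬝ᵥ x) • q := by
    intro x; rw [Matrix.toLin'_apply]; exact hmv x
  -- the quadratic
  have quad_iff : ∀ lam : ℝ, lam ^ 2 - (a - c) * lam + (b ^ 2 - a * c) = 0 ↔
      (lam = lamP ∨ lam = lamM) := by
    intro lam
    constructor
    · intro h
      have hfac : (lam - lamP) * (lam - lamM) = 0 := by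
        have : (lam - lamP) * (lam - lamM)
            = lam ^ 2 - (lamP + lamM) * lam + lamP * lamM := by ring
        rw [this, hsum, hprod]; exact h
      rcases mul_eq_zero.mp hfac with h' | h'
      · left; linarith
      · right; linarith
    · rintro (h | h) <;> subst h <;> nlinarith [hsum, hprod]
  -- forward: eigenvalue → quadratic
  have fwd : ∀ lam : ℝ, lam ≠ 0 → Module.End.HasEigenvalue (Matrix.toLin' M) lam →
      lam ^ 2 - (a - c) * lam + (b ^ 2 - a * c) = 0 := by
    intro lam hne heig
    obtain ⟨x, hx⟩ := heig.exists_hasEigenvector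
    have hxne : x ≠ 0 := hx.right
    have hxeq : (p ⬝ᵥ x) • p - (q ⬝ᵥ x) • q = lam • x := by
      rw [← htl x]; exact hx.apply_eq_smul
    set al := p ⬝ᵥ x with hal
    set be := q ⬝ᵥ x with hbe
    have e1 : lam * al = a * al - b * be := by
      have := congrArg (fun y => p ⬝ᵥ y) hxeq
      simpa [dotProduct_sub, dotProduct_smul, ← ha, hb, hqp, ← hal, ← hbe,
        mul_comm, smul_eq_mul] using this.symm
    have e2 : lam * be = b * al - c * be := by
      have := congrArg (fun y => q ⬝ᵥ y) hxeq
      simpa [dotProduct_sub, dotProduct_smul, ← hc, hb, hqp, ← hal, ← hbe,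
        mul_comm, smul_eq_mul] using this.symm
    have hker : al ≠ 0 ∨ be ≠ 0 := by
      by_contra hcon
      push_neg at hcon
      have hx0 : lam • x = 0 := by
        rw [← hxeq, hcon.1, hcon.2]; simp
      rcases smul_eq_zero.mp hx0 with h' | h'
      · exact hne h'
      · exact hxne h'
    have key1 : (lam ^ 2 - (a - c) * lam + (b ^ 2 - a * c)) * al = 0 := by
      linear_combination (lam + c) * e1 - b * e2
    have key2 : (lam ^ 2 - (a - c) * lam + (b ^ 2 - a * c)) * be = 0 := by
      linear_combination b * e1 + (lam - a) * e2
    rcases hker with h' | h'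
    · exact (mul_eq_zero.mp key1).resolve_right h'
    · exact (mul_eq_zero.mp key2).resolve_right h'
  -- backward: quadratic + nonzero → eigenvalue
  have bwd : ∀ lam : ℝ, lam ≠ 0 →
      lam ^ 2 - (a - c) * lam + (b ^ 2 - a * c) = 0 →
      Module.End.HasEigenvalue (Matrix.toLin' M) lam := by
    intro lam hne hQ
    set x1 : Fin n → ℝ := b • p - (a - lam) • q with hx1
    set x2 : Fin n → ℝ := (lam + c) • p - b • q with hx2
    have hd1p : p ⬝ᵥ x1 = lam * b := by
      rw [hx1]
      simp only [dotProduct_sub, dotProduct_smul, smul_eq_mul, ← ha, hb]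
      ring
    have hd1q : q ⬝ᵥ x1 = lam * (a - lam) := by
      rw [hx1]
      simp only [dotProduct_sub, dotProduct_smul, smul_eq_mul, ← hc, hqp]
      nlinarith [hQ]
    have hd2p : p ⬝ᵥ x2 = lam * (lam + c) := by
      rw [hx2]
      simp only [dotProduct_sub, dotProduct_smul, smul_eq_mul, ← ha, hb]
      nlinarith [hQ]
    have hd2q : q ⬝ᵥ x2 = lam * b := by
      rw [hx2]
      simp only [dotProduct_sub, dotProduct_smul, smul_eq_mul, ← hc, hqp]
      ring
    have heig1 : Matrix.toLin' M x1 = lam • x1 := by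
      rw [htl x1, hd1p, hd1q, hx1]
      ext i
      simp [Pi.smul_apply, smul_eq_mul]
      ring
    have heig2 : Matrix.toLin' M x2 = lam • x2 := by
      rw [htl x2, hd2p, hd2q, hx2]
      ext i
      simp [Pi.smul_apply, smul_eq_mul]
      ring
    by_cases h1 : x1 ≠ 0
    · exact Module.End.hasEigenvalue_of_hasEigenvector
        ⟨Module.End.mem_eigenspace_iff.mpr heig1, h1⟩
    by_cases h2 : x2 ≠ 0
    · exact Module.End.hasEigenvalue_of_hasEigenvector
        ⟨Module.End.mem_eigenspace_iff.mpr heig2, h2⟩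
    exfalso
    push_neg at h1 h2
    have hb0 : b = 0 := by
      have : p ⬝ᵥ x1 = 0 := by rw [h1, dotProduct_zero]
      rw [hd1p] at this
      exact (mul_eq_zero.mp this).resolve_left hne
    have hfac : (lam - a) * (lam + c) = 0 := by nlinarith [hQ]
    rcases mul_eq_zero.mp hfac with h' | h'
    · -- lam = a
      have hla : lam = a := by linarith
      have hane : a ≠ 0 := fun h => hne (by rw [hla, h])
      have hac : 0 < lam + c := by
        rcases lt_or_eq_of_le ha0 with h'' | h''
        · rw [hla]; linarith
        · exact absurd h''.symm hane
      have hp0 : p = 0 := by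
        have : ((lam + c) • p : Fin n → ℝ) = 0 := by
          have := h2
          rw [hx2, hb0] at this
          simpa using this
        rcases smul_eq_zero.mp this with h'' | h''
        · exact absurd h'' (ne_of_gt hac)
        · exact h''
      exact hane (by rw [ha, hp0]; simp)
    · -- lam = -c
      have hlc : c = -lam := by linarith
      have hcne : c ≠ 0 := fun h => hne (by rw [hlc] at h; linarith)
      have hcpos : 0 < c := lt_of_le_of_ne hc0 (Ne.symm hcne)
      have haml : 0 < a - lam := by
        have : lam = -c := by linarith
        rw [this]; linarith
      have hq0 : q = 0 := by
        have : ((a - lam) • q : Fin n → ℝ) = 0 := by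
          have := h1
          rw [hx1, hb0] at this
          simpa using this
        rcases smul_eq_zero.mp this with h'' | h''
        · exact absurd h'' (ne_of_gt haml)
        · exact h''
      exact hcne (by rw [hc, hq0]; simp)
  refine ⟨?_, ?_, ?_⟩
  · -- part 1
    rw [hM, hu, hv]
    ext i j
    simp [Matrix.vecMulVec_apply, Matrix.smul_apply, Matrix.add_apply, Pi.add_apply,
      Pi.sub_apply, smul_eq_mul]
    ring
  · -- part 2
    intro lam hne
    constructor
    · intro h
      exact (quad_iff lam).mp (fwd lam hne h)
    · intro h
      exact bwd lam hne ((quad_iff lam).mpr h)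
  · -- part 3
    intro hn
    have hmin : min 0 lamM = lamM := min_eq_right hlamM0
    rw [hmin]
    constructor
    · -- membership
      show Module.End.HasEigenvalue (Matrix.toLin' M) lamM
      by_cases hMne : lamM ≠ 0
      · exact bwd lamM hMne ((quad_iff lamM).mpr (Or.inr rfl))
      · push_neg at hMne
        -- lamM = 0; then b^2 = a*c and p, q are linearly dependent
        have hQ0 : b ^ 2 - a * c = 0 := by
          have := (quad_iff lamM).mpr (Or.inr rfl)
          rw [hMne] at this
          nlinarith [this]
        rw [hMne]
        -- find x ≠ 0 in the kernel
        have : ∃ x : Fin n → ℝ, x ≠ 0 ∧ Matrix.toLin' M x = 0 := by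
          by_cases hcz : c = 0
          · have hq0 : q = 0 := by rw [hc] at hcz; exact dotProduct_self_eq_zero.mp hcz
            obtain ⟨x, hxne, hxo⟩ := rk2_ortho hn p
            refine ⟨x, hxne, ?_⟩
            rw [htl x, hxo, hq0]
            simp
          · have hpq : p = (b / c) • q := by
              have hw : (p - (b / c) • q) ⬝ᵥ (p - (b / c) • q) = 0 := by
                simp only [sub_dotProduct, dotProduct_sub,
                  smul_dotProduct, dotProduct_smul, smul_eq_mul,
                  ← ha, ← hc, hb, hqp]
                field_simp
                nlinarith [hQ0]
              have := dotProduct_self_eq_zero.mp hw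
              have : p - (b / c) • q = 0 := this
              linear_combination (norm := module) this
            obtain ⟨x, hxne, hxo⟩ := rk2_ortho hn q
            refine ⟨x, hxne, ?_⟩
            rw [htl x, hpq]
            have hpx : ((b / c) • q) ⬝ᵥ x = 0 := by
              rw [smul_dotProduct, hxo, smul_zero]
            rw [hpx, hxo]
            simp
        obtain ⟨x, hxne, hx0⟩ := this
        exact Module.End.hasEigenvalue_of_hasEigenvector
          ⟨Module.End.mem_eigenspace_iff.mpr (by rw [hx0]; simp), hxne⟩
    · -- lower bound
      intro lam hlam
      by_cases hne : lam = 0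
      · rw [hne]; exact hlamM0
      · rcases (quad_iff lam).mp (fwd lam hne hlam) with h' | h'
        · rw [h']; exact hMle
        · rw [h']
end
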